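/- arXiv:math/0002070 — 2 statements merged into one kernel-verified Lean document; each statement's English description precedes it below -/
import Mathlib

section
/- Let G be a König-Egerváry graph. Then the set of α-critical edges of G forms a matching, i.e., no two distinct α-critical edges of G share an endpoint. -/
open scoped Classical

namespace KEG

variable {V : Type*}

/-- `S` is a stable (independent) set of vertices of `G`. -/
def IsStable (G : SimpleGraph V) (S : Finset V) : Prop :=
  ∀ ⦃x⦄, x ∈ S → ∀ ⦃y⦄, y ∈ S → ¬G.Adj x y

/-- The stability number `α(G)`: maximum cardinality of a stable set. -/
noncomputable def alphaNum (G : SimpleGraph V) : ℕ :=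
  sSup {n | ∃ S : Finset V, IsStable G S ∧ S.card = n}

/-- `S` is a maximum stable set of `G`. -/
def IsMaxStable (G : SimpleGraph V) (S : Finset V) : Prop :=
  IsStable G S ∧ S.card = alphaNum G

/-- `M` is a matching of `G`: a set of edges of `G`, pairwise non-incident. -/
def IsMatching (G : SimpleGraph V) (M : Finset (Sym2 V)) : Prop :=
  (∀ e ∈ M, e ∈ G.edgeSet) ∧
    ∀ e ∈ M, ∀ f ∈ M, e ≠ f → ∀ v : V, v ∈ e → v ∉ f

/-- The matching number `μ(G)`: maximum cardinality of a matching. -/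
noncomputable def muNum (G : SimpleGraph V) : ℕ :=
  sSup {n | ∃ M : Finset (Sym2 V), IsMatching G M ∧ M.card = n}

/-- A perfect matching: a matching covering every vertex. -/
def IsPerfectMatching (G : SimpleGraph V) (M : Finset (Sym2 V)) : Prop :=
  IsMatching G M ∧ ∀ v : V, ∃ e ∈ M, v ∈ e

/-- A maximal matching: a matching such that no edge of `G` can be added to it
while keeping pairwise non-incidence, i.e. every edge of `G` outside `M` is
incident to an edge of `M`. -/
def IsMaximalMatching (G : SimpleGraph V) (M : Finset (Sym2 V)) : Prop :=
  IsMatching G M ∧ ∀ e ∈ G.edgeSet, e ∉ M → ∃ f ∈ M, ∃ v : V, v ∈ e ∧ v ∈ f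

/-- `G` is a König-Egerváry graph: `α(G) + μ(G) = |V(G)|`. -/
def KonigEgervary (G : SimpleGraph V) [Fintype V] : Prop :=
  alphaNum G + muNum G = Fintype.card V

/-- `e` is an α-critical edge of `G`: `α(G - e) > α(G)`. -/
def IsAlphaCritical (G : SimpleGraph V) (e : Sym2 V) : Prop :=
  e ∈ G.edgeSet ∧ alphaNum G < alphaNum (G.deleteEdges {e})

/-- `e` is a μ-critical edge of `G`: `μ(G - e) < μ(G)`. -/
def IsMuCritical (G : SimpleGraph V) (e : Sym2 V) : Prop :=
  e ∈ G.edgeSet ∧ muNum (G.deleteEdges {e}) < muNum G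

/-- `core(G)`: the set of vertices belonging to every maximum stable set of `G`. -/
def core (G : SimpleGraph V) : Set V :=
  {v | ∀ S : Finset V, IsMaxStable G S → v ∈ S}

/-- `ξ(G) = |core(G)|`. -/
noncomputable def xi (G : SimpleGraph V) : ℕ := (core G).ncard

/-- `σ(G)`: the number of vertices belonging to no maximum stable set of `G`. -/
noncomputable def sigmaNum (G : SimpleGraph V) : ℕ :=
  {v : V | ∀ S : Finset V, IsMaxStable G S → v ∉ S}.ncard

/-- `η(G)`: the number of α-critical edges of `G`. -/
noncomputable def eta (G : SimpleGraph V) : ℕ :=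
  {e : Sym2 V | IsAlphaCritical G e}.ncard

/-- `N(A)`: the set of vertices adjacent to some vertex of `A`. -/
def nbhd (G : SimpleGraph V) (A : Set V) : Set V :=
  {v | ∃ a ∈ A, G.Adj a v}

/-- `N[A] = A ∪ N(A)`: the closed neighborhood of `A`. -/
def closedNbhd (G : SimpleGraph V) (A : Set V) : Set V :=
  A ∪ nbhd G A


section Aux

variable [Fintype V]

lemma alpha_bdd (G : SimpleGraph V) :
    BddAbove {n | ∃ S : Finset V, IsStable G S ∧ S.card = n} := by
  refine ⟨Fintype.card V, ?_⟩
  rintro n ⟨S, -, rfl⟩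
  exact S.card_le_univ

lemma mu_bdd (G : SimpleGraph V) :
    BddAbove {n | ∃ M : Finset (Sym2 V), IsMatching G M ∧ M.card = n} := by
  refine ⟨Fintype.card (Sym2 V), ?_⟩
  rintro n ⟨M, -, rfl⟩
  exact M.card_le_univ

lemma card_le_alpha (G : SimpleGraph V) {S : Finset V} (h : IsStable G S) :
    S.card ≤ alphaNum G :=
  le_csSup (alpha_bdd G) ⟨S, h, rfl⟩

lemma card_le_mu (G : SimpleGraph V) {M : Finset (Sym2 V)} (h : IsMatching G M) :
    M.card ≤ muNum G :=
  le_csSup (mu_bdd G) ⟨M, h, rfl⟩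

lemma exists_max_stable (G : SimpleGraph V) :
    ∃ S : Finset V, IsStable G S ∧ S.card = alphaNum G := by
  have : alphaNum G ∈ {n | ∃ S : Finset V, IsStable G S ∧ S.card = n} :=
    Nat.sSup_mem ⟨0, ∅, by intro x hx; simp at hx, rfl⟩ (alpha_bdd G)
  exact this

lemma exists_max_matching (G : SimpleGraph V) :
    ∃ M : Finset (Sym2 V), IsMatching G M ∧ M.card = muNum G := by
  have : muNum G ∈ {n | ∃ M : Finset (Sym2 V), IsMatching G M ∧ M.card = n} :=
    Nat.sSup_mem ⟨0, ∅, ⟨by simp, by simp⟩, rfl⟩ (mu_bdd G)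
  exact this

lemma stable_add_matching_le (G : SimpleGraph V) {S : Finset V} {M : Finset (Sym2 V)}
    (hS : IsStable G S) (hM : IsMatching G M) : S.card + M.card ≤ Fintype.card V := by
  classical
  have hch : ∀ g : {x // x ∈ M}, ∃ v : V, v ∈ g.1 ∧ v ∉ S := by
    rintro ⟨g, hg⟩
    have hge := hM.1 g hg
    induction g using Sym2.ind with
    | _ x y =>
      rw [SimpleGraph.mem_edgeSet] at hge
      by_cases hx : x ∈ S
      · exact ⟨y, Sym2.mem_mk_right x y, fun hy => hS hx hy hge⟩
      · exact ⟨x, Sym2.mem_mk_left x y, hx⟩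
  choose fv hfv using hch
  have hmaps : ∀ g ∈ M.attach, fv g ∈ Sᶜ := by
    intro g _
    simpa using (hfv g).2
  have hinj : Set.InjOn fv M.attach := by
    intro g _ g' _ hEq
    by_contra hne
    have h1 : fv g ∈ g.1 := (hfv g).1
    have h2 : fv g' ∈ g'.1 := (hfv g').1
    have hne' : g.1 ≠ g'.1 := fun h => hne (Subtype.ext h)
    exact hM.2 g.1 g.2 g'.1 g'.2 hne' (fv g) h1 (hEq ▸ h2)
  have hcard : M.card ≤ Sᶜ.card := by
    have := Finset.card_le_card_of_injOn fv hmaps hinj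
    simpa using this
  have := Finset.card_add_card_compl S
  omega

lemma alpha_add_mu_le (G : SimpleGraph V) :
    alphaNum G + muNum G ≤ Fintype.card V := by
  obtain ⟨S, hS, hScard⟩ := exists_max_stable G
  obtain ⟨M, hM, hMcard⟩ := exists_max_matching G
  rw [← hScard, ← hMcard]
  exact stable_add_matching_le G hS hM

lemma mu_pos_of_edge (G : SimpleGraph V) {e : Sym2 V} (he : e ∈ G.edgeSet) :
    1 ≤ muNum G := by
  have : IsMatching G {e} := by
    constructor
    · intro g hg; simp at hg; subst hg; exact he
    · intro g hg g' hg' hne; simp at hg hg'; subst hg; subst hg'; exact absurd rfl hne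
  simpa using card_le_mu G this

/-- Every α-critical edge of a König–Egerváry graph lies in every maximum matching. -/
lemma alphaCritical_mem_max_matching (G : SimpleGraph V) (hG : KonigEgervary G)
    {e : Sym2 V} (he : IsAlphaCritical G e)
    {M : Finset (Sym2 V)} (hM : IsMatching G M) (hMcard : M.card = muNum G) :
    e ∈ M := by
  classical
  by_contra heM
  -- μ(G - e) < μ(G)
  have hsum : alphaNum (G.deleteEdges {e}) + muNum (G.deleteEdges {e}) ≤ Fintype.card V :=
    alpha_add_mu_le _
  have halpha : alphaNum G < alphaNum (G.deleteEdges {e}) := he.2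
  have hmu : muNum (G.deleteEdges {e}) < muNum G := by
    have := hG
    unfold KonigEgervary at this
    have hpos : 1 ≤ muNum G := mu_pos_of_edge G he.1
    omega
  -- but M is a matching of G - e
  have hM' : IsMatching (G.deleteEdges {e}) M := by
    constructor
    · intro g hg
      rw [SimpleGraph.edgeSet_deleteEdges]
      exact ⟨hM.1 g hg, by simp; rintro rfl; exact heM hg⟩
    · exact hM.2
  have := card_le_mu _ hM'
  omega

end Aux

/-- In a König-Egerváry graph, the α-critical edges form a matching:
no two distinct α-critical edges share an endpoint. -/
theorem stmt_2 {V : Type*} [Fintype V] (G : SimpleGraph V)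
    (hG : KonigEgervary G) (e f : Sym2 V)
    (he : IsAlphaCritical G e) (hf : IsAlphaCritical G f) (hef : e ≠ f)
    (v : V) (hv : v ∈ e) : v ∉ f := by
  obtain ⟨M, hM, hMcard⟩ := exists_max_matching G
  have heM : e ∈ M := alphaCritical_mem_max_matching G hG he hM hMcard
  have hfM : f ∈ M := alphaCritical_mem_max_matching G hG hf hM hMcard
  exact hM.2 e heM f hfM hef v hv

end KEG
end

section
/- Let G be any finite simple graph. Then no α-critical edge of G has an endpoint in the closed neighborhood N[core(G)] of core(G); that is, if e = xy is an edge with α(G − e) > α(G), then neither x nor y belongs to core(G) or is adjacent to a vertex of core(G). -/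
open scoped Classical

namespace KEG

variable {V : Type*}

lemma bddAbove_stable {V : Type*} [Fintype V] (G : SimpleGraph V) :
    BddAbove {n | ∃ S : Finset V, IsStable G S ∧ S.card = n} := by
  refine ⟨Fintype.card V, ?_⟩
  rintro n ⟨S, -, rfl⟩
  exact S.card_le_univ

lemma stable_card_le {V : Type*} [Fintype V] {G : SimpleGraph V} {S : Finset V}
    (h : IsStable G S) : S.card ≤ alphaNum G :=
  le_csSup (bddAbove_stable G) ⟨S, h, rfl⟩

lemma key {V : Type*} [Fintype V] (G : SimpleGraph V) (x y : V)
    (he : IsAlphaCritical G s(x, y)) : x ∉ closedNbhd G (core G) := by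
  obtain ⟨he1, he2⟩ := he
  have hadj : G.Adj x y := he1
  set G' := G.deleteEdges {s(x, y)} with hG'
  -- obtain a maximum stable set of G'
  have hne : ({n | ∃ S : Finset V, IsStable G' S ∧ S.card = n}).Nonempty :=
    ⟨0, ∅, by intro a ha; simp at ha, rfl⟩
  obtain ⟨S, hS, hcard⟩ := Nat.sSup_mem hne (bddAbove_stable G')
  have hgt : alphaNum G < S.card := by rw [hcard]; exact he2
  -- both endpoints belong to S
  have hxy : x ∈ S ∧ y ∈ S := by
    by_contra h
    have hstab : IsStable G S := by
      intro a ha b hb hab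
      have : ¬ G'.Adj a b := hS ha hb
      rw [SimpleGraph.deleteEdges_adj] at this
      push_neg at this
      have heq := this hab
      simp only [Set.mem_singleton_iff] at heq
      rw [Sym2.eq_iff] at heq
      rcases heq with ⟨rfl, rfl⟩ | ⟨rfl, rfl⟩
      · exact h ⟨ha, hb⟩
      · exact h ⟨hb, ha⟩
    exact absurd (stable_card_le hstab) (not_le.mpr hgt)
  obtain ⟨hxS, hyS⟩ := hxy
  -- erasing either endpoint gives a maximum stable set of G
  have herase : ∀ z ∈ S, z = x ∨ z = y → IsMaxStable G (S.erase z) := by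
    intro z hzS hz
    have hstab : IsStable G (S.erase z) := by
      intro a ha b hb hab
      have haz := Finset.ne_of_mem_erase ha
      have hbz := Finset.ne_of_mem_erase hb
      have haS := Finset.mem_of_mem_erase ha
      have hbS := Finset.mem_of_mem_erase hb
      refine hS haS hbS ?_
      rw [SimpleGraph.deleteEdges_adj]
      refine ⟨hab, ?_⟩
      simp only [Set.mem_singleton_iff]
      rw [Sym2.eq_iff]
      rintro (⟨rfl, rfl⟩ | ⟨rfl, rfl⟩)
      · rcases hz with rfl | rfl
        · exact haz rfl
        · exact hbz rfl
      · rcases hz with rfl | rfl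
        · exact hbz rfl
        · exact haz rfl
    refine ⟨hstab, le_antisymm (stable_card_le hstab) ?_⟩
    rw [Finset.card_erase_of_mem hzS]
    omega
  have hex : IsMaxStable G (S.erase x) := herase x hxS (Or.inl rfl)
  have hey : IsMaxStable G (S.erase y) := herase y hyS (Or.inr rfl)
  rintro (hc | ⟨c, hc, hcx⟩)
  · exact Finset.notMem_erase x S (hc _ hex)
  · have hcSy : c ∈ S.erase y := hc _ hey
    have hxSy : x ∈ S.erase y := Finset.mem_erase.mpr ⟨hadj.ne, hxS⟩
    exact hey.1 hcSy hxSy hcx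

/-- In any graph, no α-critical edge has an endpoint in `N[core(G)]`. -/
theorem stmt_11 {V : Type*} [Fintype V] (G : SimpleGraph V)
    (e : Sym2 V) (he : IsAlphaCritical G e) :
    ∀ v ∈ e, v ∉ closedNbhd G (core G) := by
  induction e using Sym2.inductionOn with
  | hf x y =>
    intro v hv
    rw [Sym2.mem_iff] at hv
    rcases hv with rfl | rfl
    · exact key G v y he
    · refine key G v x ?_
      rwa [Sym2.eq_swap] at he

end KEG
end
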